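/- Let M be a matroid on a finite ground set E with rank function r, and let 𝓒 be a linear class of circuits of M. Then the function r_𝓒 : 2^E → ℤ defined by r_𝓒(S) = r(S) if every circuit of M contained in S belongs to 𝓒, and r_𝓒(S) = r(S) + 1 otherwise, is the rank function of a matroid on E (an elementary lift of M). -/

import Mathlib

/-- The independence axioms for a (finite) matroid given by its collection of
independent sets. -/
def IsMatroidIndep {α : Type*} [DecidableEq α] (Ind : Finset α → Prop) : Prop :=
  Ind ∅ ∧ (∀ ⦃I J : Finset α⦄, Ind J → I ⊆ J → Ind I) ∧
    ∀ ⦃I J : Finset α⦄, Ind I → Ind J → I.card < J.card →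
      ∃ e ∈ J, e ∉ I ∧ Ind (insert e I)

/-- The rank of a set `S`: the largest cardinality of an independent subset of `S`. -/
noncomputable def matroidRank {α : Type*} (Ind : Finset α → Prop) (S : Finset α) : ℕ :=
  sSup {n | ∃ I ⊆ S, Ind I ∧ I.card = n}

/-- A circuit: a minimal dependent set. -/
def IsCircuit {α : Type*} (Ind : Finset α → Prop) (C : Finset α) : Prop :=
  ¬ Ind C ∧ ∀ C' ⊂ C, Ind C'

/-- `S` is `𝓒`-balanced: every circuit contained in `S` belongs to `𝓒`. -/
def CBalanced {α : Type*} (Ind : Finset α → Prop) (𝓒 : Set (Finset α)) (S : Finset α) : Prop :=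
  ∀ C ⊆ S, IsCircuit Ind C → C ∈ 𝓒

set_option linter.unusedSectionVars false
namespace LiftProof
variable {E : Type*} [DecidableEq E] {Ind : Finset E → Prop}

lemma bddAbove_rankSet (S : Finset E) :
    BddAbove {n | ∃ I ⊆ S, Ind I ∧ I.card = n} := by
  refine ⟨S.card, ?_⟩
  rintro n ⟨I, hIS, _, rfl⟩
  exact Finset.card_le_card hIS

lemma le_rank {I S : Finset E} (hI : Ind I) (hIS : I ⊆ S) :
    I.card ≤ matroidRank Ind S :=
  le_csSup (bddAbove_rankSet S) ⟨I, hIS, hI, rfl⟩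

lemma exists_rank_witness (hM : IsMatroidIndep Ind) (S : Finset E) :
    ∃ I, I ⊆ S ∧ Ind I ∧ I.card = matroidRank Ind S := by
  have hne : {n | ∃ I ⊆ S, Ind I ∧ I.card = n}.Nonempty :=
    ⟨0, ∅, by simp, hM.1, by simp⟩
  obtain ⟨I, h1, h2, h3⟩ := Nat.sSup_mem hne (bddAbove_rankSet S)
  exact ⟨I, h1, h2, h3⟩

lemma rank_le_card (hM : IsMatroidIndep Ind) (S : Finset E) :
    matroidRank Ind S ≤ S.card := by
  obtain ⟨I, h1, _, h3⟩ := exists_rank_witness hM S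
  rw [← h3]; exact Finset.card_le_card h1

lemma rank_mono (hM : IsMatroidIndep Ind) {S T : Finset E} (h : S ⊆ T) :
    matroidRank Ind S ≤ matroidRank Ind T := by
  obtain ⟨I, h1, h2, h3⟩ := exists_rank_witness hM S
  rw [← h3]; exact le_rank h2 (h1.trans h)

lemma rank_eq_card_of_indep (hM : IsMatroidIndep Ind) {I : Finset E} (hI : Ind I) :
    matroidRank Ind I = I.card :=
  le_antisymm (rank_le_card hM I) (le_rank hI subset_rfl)

lemma indep_of_rank_eq_card (hM : IsMatroidIndep Ind) {S : Finset E}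
    (h : matroidRank Ind S = S.card) : Ind S := by
  obtain ⟨I, h1, h2, h3⟩ := exists_rank_witness hM S
  have : I = S := Finset.eq_of_subset_of_card_le h1 (by omega)
  rwa [← this]

lemma exists_basis_superset (hM : IsMatroidIndep Ind) {I S : Finset E}
    (hI : Ind I) (hIS : I ⊆ S) :
    ∃ B, I ⊆ B ∧ B ⊆ S ∧ Ind B ∧ B.card = matroidRank Ind S := by
  by_cases h : I.card = matroidRank Ind S
  · exact ⟨I, subset_rfl, hIS, hI, h⟩
  · have hlt : I.card < matroidRank Ind S := lt_of_le_of_ne (le_rank hI hIS) h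
    obtain ⟨J, hJS, hJ, hJc⟩ := exists_rank_witness hM S
    obtain ⟨e, heJ, heI, hins⟩ := hM.2.2 hI hJ (by omega)
    have : (insert e I).card = I.card + 1 := Finset.card_insert_of_notMem heI
    have hsub : insert e I ⊆ S := Finset.insert_subset (hJS heJ) hIS
    obtain ⟨B, hB1, hB2, hB3, hB4⟩ := exists_basis_superset hM hins hsub
    exact ⟨B, (Finset.subset_insert e I).trans hB1, hB2, hB3, hB4⟩
termination_by matroidRank Ind S - I.card
decreasing_by simp_wf; omega

lemma rank_submod (hM : IsMatroidIndep Ind) (A B : Finset E) :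
    matroidRank Ind (A ∪ B) + matroidRank Ind (A ∩ B) ≤
      matroidRank Ind A + matroidRank Ind B := by
  obtain ⟨I0, hI0s, hI0, hI0c⟩ := exists_rank_witness hM (A ∩ B)
  obtain ⟨B1, hsub, hB1s, hB1, hB1c⟩ :=
    exists_basis_superset hM hI0 (hI0s.trans (Finset.inter_subset_union.trans subset_rfl))
  have hA : (B1 ∩ A).card ≤ matroidRank Ind A :=
    le_rank (hM.2.1 hB1 (Finset.inter_subset_left)) Finset.inter_subset_right
  have hB : (B1 ∩ B).card ≤ matroidRank Ind B :=
    le_rank (hM.2.1 hB1 (Finset.inter_subset_left)) Finset.inter_subset_right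
  have e1 : (B1 ∩ A) ∪ (B1 ∩ B) = B1 := by
    rw [← Finset.inter_union_distrib_left]; exact Finset.inter_eq_left.mpr hB1s
  have e2 : (B1 ∩ A) ∩ (B1 ∩ B) = B1 ∩ (A ∩ B) := by
    rw [← Finset.inter_inter_distrib_left]
  have hc := Finset.card_union_add_card_inter (B1 ∩ A) (B1 ∩ B)
  rw [e1, e2] at hc
  have h2 : I0 ⊆ B1 ∩ (A ∩ B) := Finset.subset_inter hsub hI0s
  have h3 : matroidRank Ind (A ∩ B) ≤ (B1 ∩ (A ∩ B)).card := by
    rw [← hI0c]; exact Finset.card_le_card h2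
  omega

lemma rank_union_le (hM : IsMatroidIndep Ind) (A B : Finset E) :
    matroidRank Ind (A ∪ B) ≤ matroidRank Ind A + matroidRank Ind B := by
  have := rank_submod hM A B
  omega

lemma rank_le_erase_add_one (hM : IsMatroidIndep Ind) (S : Finset E) (x : E) :
    matroidRank Ind S ≤ matroidRank Ind (S.erase x) + 1 := by
  by_cases hx : x ∈ S
  · have h1 : S ⊆ S.erase x ∪ {x} := by
      intro a ha
      by_cases hax : a = x
      · simp [hax]
      · exact Finset.mem_union_left _ (Finset.mem_erase.2 ⟨hax, ha⟩)
    calc matroidRank Ind S ≤ matroidRank Ind (S.erase x ∪ {x}) := rank_mono hM h1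
      _ ≤ matroidRank Ind (S.erase x) + matroidRank Ind {x} := rank_union_le hM _ _
      _ ≤ matroidRank Ind (S.erase x) + 1 := by
          have := rank_le_card hM ({x} : Finset E); simp at this; omega
  · rw [Finset.erase_eq_of_notMem hx]; omega

lemma nullity_mono (hM : IsMatroidIndep Ind) {A B : Finset E} (h : A ⊆ B) :
    matroidRank Ind B + A.card ≤ matroidRank Ind A + B.card := by
  have h1 : A ∪ (B \ A) = B := Finset.union_sdiff_of_subset h
  have h2 : matroidRank Ind (A ∪ (B \ A)) ≤ matroidRank Ind A + matroidRank Ind (B \ A) :=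
    rank_union_le hM _ _
  have h3 : matroidRank Ind (B \ A) ≤ (B \ A).card := rank_le_card hM _
  have h4 : (B \ A).card = B.card - A.card := Finset.card_sdiff_of_subset h
  have h5 : A.card ≤ B.card := Finset.card_le_card h
  rw [h1] at h2
  omega

lemma rank_insert_eq_of_subset (hM : IsMatroidIndep Ind) {A B : Finset E} {x : E}
    (hAB : A ⊆ B) (h : matroidRank Ind (insert x A) = matroidRank Ind A) :
    matroidRank Ind (insert x B) = matroidRank Ind B := by
  have h1 : insert x A ∪ B = insert x B := by
    rw [Finset.insert_union, Finset.union_eq_right.mpr hAB]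
  have h2 : A ⊆ insert x A ∩ B := Finset.subset_inter (Finset.subset_insert x A) hAB
  have h3 := rank_submod hM (insert x A) B
  rw [h1] at h3
  have h4 : matroidRank Ind A ≤ matroidRank Ind (insert x A ∩ B) := by
    obtain ⟨I, hI1, hI2, hI3⟩ := exists_rank_witness hM A
    rw [← hI3]; exact le_rank hI2 (hI1.trans h2)
  have h5 : matroidRank Ind B ≤ matroidRank Ind (insert x B) :=
    rank_mono hM (Finset.subset_insert x B)
  omega

lemma rank_union_eq_of_forall_insert (hM : IsMatroidIndep Ind) {S T : Finset E}
    (h : ∀ e ∈ T, matroidRank Ind (insert e S) = matroidRank Ind S) :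
    matroidRank Ind (S ∪ T) = matroidRank Ind S := by
  induction T using Finset.induction with
  | empty => simp
  | insert a T' ha ih =>
    have hT' : matroidRank Ind (S ∪ T') = matroidRank Ind S :=
      ih (fun e he => h e (Finset.mem_insert_of_mem he))
    have h1 : S ∪ insert a T' = insert a (S ∪ T') := by
      ext y; simp [or_left_comm, or_comm, or_assoc]
    rw [h1]
    rw [rank_insert_eq_of_subset hM Finset.subset_union_left
      (h a (Finset.mem_insert_self a T'))]
    exact hT'

lemma exists_circuit_of_dep (hM : IsMatroidIndep Ind) {S : Finset E} (h : ¬ Ind S) :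
    ∃ C, C ⊆ S ∧ IsCircuit Ind C := by
  by_cases hall : ∀ C' ⊂ S, Ind C'
  · exact ⟨S, subset_rfl, h, hall⟩
  · push_neg at hall
    obtain ⟨S', hS', hdep⟩ := hall
    have : S'.card < S.card := Finset.card_lt_card hS'
    obtain ⟨C, h1, h2⟩ := exists_circuit_of_dep hM hdep
    exact ⟨C, h1.trans hS'.subset, h2⟩
termination_by S.card

lemma circuit_rank (hM : IsMatroidIndep Ind) {C : Finset E} (hC : IsCircuit Ind C) :
    matroidRank Ind C + 1 = C.card := by
  have hne : C.Nonempty := by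
    rcases C.eq_empty_or_nonempty with rfl | h
    · exact absurd hM.1 hC.1
    · exact h
  obtain ⟨x, hx⟩ := hne
  have h1 : Ind (C.erase x) := hC.2 _ (Finset.erase_ssubset hx)
  have h2 : (C.erase x).card = C.card - 1 := Finset.card_erase_of_mem hx
  have h3 := le_rank h1 (Finset.erase_subset x C)
  have h4 := rank_le_card hM C
  have h5 : matroidRank Ind C ≠ C.card := fun hh => hC.1 (indep_of_rank_eq_card hM hh)
  have h6 : 1 ≤ C.card := Finset.card_pos.2 ⟨x, hx⟩
  omega

lemma circuits_ne_rank (hM : IsMatroidIndep Ind) {C₁ C₂ : Finset E}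
    (h1 : IsCircuit Ind C₁) (h2 : IsCircuit Ind C₂) (hne : C₁ ≠ C₂) :
    matroidRank Ind (C₁ ∪ C₂) + 2 ≤ (C₁ ∪ C₂).card := by
  have hssub : C₁ ∩ C₂ ⊂ C₁ := by
    refine ⟨Finset.inter_subset_left, fun hsub => ?_⟩
    have h12 : C₁ ⊆ C₂ := fun a ha => (Finset.mem_inter.1 (hsub ha)).2
    rcases eq_or_lt_of_le h12 with heq | hlt
    · exact hne heq
    · exact h1.1 (h2.2 _ hlt)
  have hii : Ind (C₁ ∩ C₂) := h1.2 _ hssub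
  have hri : matroidRank Ind (C₁ ∩ C₂) = (C₁ ∩ C₂).card := rank_eq_card_of_indep hM hii
  have hs := rank_submod hM C₁ C₂
  have hc1 := circuit_rank hM h1
  have hc2 := circuit_rank hM h2
  have hcards := Finset.card_union_add_card_inter C₁ C₂
  omega

lemma unique_circuit_of_nullity_one (hM : IsMatroidIndep Ind) {S C₁ C₂ : Finset E}
    (hS : matroidRank Ind S + 1 = S.card)
    (h1 : IsCircuit Ind C₁) (h2 : IsCircuit Ind C₂) (hs1 : C₁ ⊆ S) (hs2 : C₂ ⊆ S) :
    C₁ = C₂ := by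
  by_contra hne
  have ha := circuits_ne_rank hM h1 h2 hne
  have hb := nullity_mono hM (Finset.union_subset hs1 hs2)
  omega

lemma rank_erase_of_mem_circuit (hM : IsMatroidIndep Ind) {S C : Finset E} {x : E}
    (hC : IsCircuit Ind C) (hx : x ∈ C) (hCS : C ⊆ S) :
    matroidRank Ind (S.erase x) = matroidRank Ind S := by
  have h1 : insert x (C.erase x) = C := Finset.insert_erase hx
  have ha : Ind (C.erase x) := hC.2 _ (Finset.erase_ssubset hx)
  have h2 : matroidRank Ind (insert x (C.erase x)) = matroidRank Ind (C.erase x) := by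
    rw [h1, rank_eq_card_of_indep hM ha, Finset.card_erase_of_mem hx]
    have := circuit_rank hM hC
    omega
  have h3 : C.erase x ⊆ S.erase x := Finset.erase_subset_erase x hCS
  have h4 := rank_insert_eq_of_subset hM h3 h2
  have h5 : insert x (S.erase x) = S := Finset.insert_erase (hCS hx)
  rw [h5] at h4
  exact h4.symm

variable {𝓒 : Set (Finset E)}

lemma fund_circuit (hM : IsMatroidIndep Ind) {I : Finset E} {e : E}
    (hI : Ind I) (he : e ∉ I) (hr : matroidRank Ind (insert e I) = I.card) :
    ∃ C, IsCircuit Ind C ∧ C ⊆ insert e I ∧ e ∈ C := by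
  have hcard : (insert e I).card = I.card + 1 := Finset.card_insert_of_notMem he
  have hdep : ¬ Ind (insert e I) := by
    intro hind
    have := rank_eq_card_of_indep hM hind
    omega
  obtain ⟨C, hCsub, hC⟩ := exists_circuit_of_dep hM hdep
  refine ⟨C, hC, hCsub, ?_⟩
  by_contra heC
  have : C ⊆ I := fun a ha => by
    rcases Finset.mem_insert.1 (hCsub ha) with rfl | h
    · exact absurd ha heC
    · exact h
  exact hC.1 (hM.2.1 hI this)

/-- Pair lemma: if `e, f ∈ cl(I) \ I` and all circuits in `insert e I` and in
`insert f I` lie in `𝓒`, then all circuits in `I ∪ {e,f}` lie in `𝓒`. -/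
lemma pair_lemma (hM : IsMatroidIndep Ind)
    (h𝓒lin : ∀ C₁ ∈ 𝓒, ∀ C₂ ∈ 𝓒,
      (matroidRank Ind (C₁ ∪ C₂) : ℤ) = (C₁ ∪ C₂).card - 2 →
      ∀ C₃ : Finset E, IsCircuit Ind C₃ → C₃ ⊆ C₁ ∪ C₂ → C₃ ∈ 𝓒)
    {I : Finset E} {e f : E}
    (hI : Ind I) (he : e ∉ I) (hf : f ∉ I) (hef : e ≠ f)
    (hre : matroidRank Ind (insert e I) = I.card)
    (hrf : matroidRank Ind (insert f I) = I.card)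
    (hfe : ∀ C, IsCircuit Ind C → C ⊆ insert e I → C ∈ 𝓒)
    (hff : ∀ C, IsCircuit Ind C → C ⊆ insert f I → C ∈ 𝓒)
    {D : Finset E} (hD : IsCircuit Ind D) (hDsub : D ⊆ I ∪ {e, f}) :
    D ∈ 𝓒 := by
  obtain ⟨Ce, hCe, hCesub, heCe⟩ := fund_circuit hM hI he hre
  obtain ⟨Cf, hCf, hCfsub, hfCf⟩ := fund_circuit hM hI hf hrf
  have hCe𝓒 : Ce ∈ 𝓒 := hfe Ce hCe hCesub
  have hCf𝓒 : Cf ∈ 𝓒 := hff Cf hCf hCfsub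
  set W : Finset E := I ∪ {e, f} with hW
  have hrI : matroidRank Ind I = I.card := rank_eq_card_of_indep hM hI
  have hrW : matroidRank Ind W = I.card := by
    rw [hW, rank_union_eq_of_forall_insert hM ?_, hrI]
    intro x hx
    rcases Finset.mem_insert.1 hx with rfl | hx'
    · rw [hre, hrI]
    · rw [Finset.mem_singleton.1 hx', hrf, hrI]
  have hWcard : W.card = I.card + 2 := by
    rw [hW]
    rw [Finset.union_comm]
    rw [Finset.card_union_of_disjoint]
    · rw [Finset.card_pair hef]; omega
    · simp only [Finset.disjoint_left, Finset.mem_insert, Finset.mem_singleton]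
      rintro a (rfl | rfl) ha <;> [exact he ha; exact hf ha]
  have hne : Ce ≠ Cf := by
    intro h
    rw [h] at heCe
    have := hCfsub heCe
    rcases Finset.mem_insert.1 this with rfl | h'
    · exact hef rfl
    · exact he h'
  have hsubW : Ce ∪ Cf ⊆ W := by
    refine Finset.union_subset (hCesub.trans ?_) (hCfsub.trans ?_) <;>
      · intro a ha
        rcases Finset.mem_insert.1 ha with rfl | h'
        · simp [hW]
        · exact Finset.mem_union_left _ h'
  have hnull2 : matroidRank Ind (Ce ∪ Cf) + 2 = (Ce ∪ Cf).card := by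
    have h1 := circuits_ne_rank hM hCe hCf hne
    have h2 := nullity_mono hM hsubW
    omega
  have hall : ∀ C₃ : Finset E, IsCircuit Ind C₃ → C₃ ⊆ Ce ∪ Cf → C₃ ∈ 𝓒 := by
    apply h𝓒lin Ce hCe𝓒 Cf hCf𝓒
    push_cast [← hnull2]
    ring
  apply hall D hD
  -- show D ⊆ Ce ∪ Cf
  intro y hy
  by_contra hyCC
  have hCCsub : Ce ∪ Cf ⊆ W.erase y :=
    fun a ha => Finset.mem_erase.2 ⟨fun h => hyCC (h ▸ ha), hsubW ha⟩
  have h1 : matroidRank Ind (W.erase y) = matroidRank Ind W :=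
    rank_erase_of_mem_circuit hM hD hy hDsub
  have h2 : (W.erase y).card = W.card - 1 := Finset.card_erase_of_mem (hDsub hy)
  have h3 := nullity_mono hM hCCsub
  omega

/-- Kernel lemma: if every element of `X` lies in `cl(I) \ I` and all circuits inside
`insert e I` (for `e ∈ X`) lie in `𝓒`, then every circuit inside `I ∪ X` lies in `𝓒`. -/
lemma kernel_lemma (hM : IsMatroidIndep Ind)
    (h𝓒lin : ∀ C₁ ∈ 𝓒, ∀ C₂ ∈ 𝓒,
      (matroidRank Ind (C₁ ∪ C₂) : ℤ) = (C₁ ∪ C₂).card - 2 →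
      ∀ C₃ : Finset E, IsCircuit Ind C₃ → C₃ ⊆ C₁ ∪ C₂ → C₃ ∈ 𝓒)
    (k : ℕ) :
    ∀ (I X C : Finset E), Ind I → (∀ e ∈ X, e ∉ I) →
      (∀ e ∈ X, matroidRank Ind (insert e I) = I.card) →
      (∀ e ∈ X, ∀ D, IsCircuit Ind D → D ⊆ insert e I → D ∈ 𝓒) →
      IsCircuit Ind C → C ⊆ I ∪ X → (C \ I).card ≤ k → C ∈ 𝓒 := by
  induction k with
  | zero =>
    intro I X C hI _ _ _ hC hCsub hk
    exfalso
    have h0 : C \ I = ∅ := Finset.card_eq_zero.1 (Nat.le_zero.1 hk)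
    have : C ⊆ I := by
      intro a ha
      by_contra haI
      exact absurd (Finset.mem_sdiff.2 ⟨ha, haI⟩) (by simp [h0])
    exact hC.1 (hM.2.1 hI this)
  | succ k ih =>
    intro I X C hI hdisj hcl hfund hC hCsub hk
    by_cases hm : (C \ I).card ≤ 1
    · -- C \ I = {e} for some e ∈ X
      have hCne : ¬ C ⊆ I := fun h => hC.1 (hM.2.1 hI h)
      have : (C \ I).Nonempty := by
        rw [Finset.sdiff_nonempty]; exact hCne
      obtain ⟨e, he⟩ := this
      have heC : e ∈ C := (Finset.mem_sdiff.1 he).1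
      have heI : e ∉ I := (Finset.mem_sdiff.1 he).2
      have heX : e ∈ X := by
        rcases Finset.mem_union.1 (hCsub heC) with h | h
        · exact absurd h heI
        · exact h
      have hsub : C ⊆ insert e I := by
        intro a ha
        by_cases haI : a ∈ I
        · exact Finset.mem_insert_of_mem haI
        · have haCI : a ∈ C \ I := Finset.mem_sdiff.2 ⟨ha, haI⟩
          have hsingle : C \ I = {e} :=
            Finset.eq_singleton_iff_unique_mem.2 ⟨he, fun x hx => by
              by_contra hxe
              have : 2 ≤ (C \ I).card := Finset.one_lt_card.2 ⟨x, hx, e, he, hxe⟩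
              omega⟩
          rw [hsingle] at haCI
          rw [Finset.mem_singleton.1 haCI]
          exact Finset.mem_insert_self _ _
      exact hfund e heX C hC hsub
    · push_neg at hm
      -- pick e f distinct in C \ I
      obtain ⟨e, he, f, hf, hef⟩ := Finset.one_lt_card.1 hm
      have heC : e ∈ C := (Finset.mem_sdiff.1 he).1
      have heI : e ∉ I := (Finset.mem_sdiff.1 he).2
      have hfC : f ∈ C := (Finset.mem_sdiff.1 hf).1
      have hfI : f ∉ I := (Finset.mem_sdiff.1 hf).2
      have heX : e ∈ X := by
        rcases Finset.mem_union.1 (hCsub heC) with h | h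
        · exact absurd h heI
        · exact h
      obtain ⟨Ce, hCe, hCesub, heCe⟩ := fund_circuit hM hI heI (hcl e heX)
      have hCe𝓒 : Ce ∈ 𝓒 := hfund e heX Ce hCe hCesub
      -- C ≠ Ce since f ∈ C, f ∉ insert e I
      have hCne : C ≠ Ce := by
        intro h
        have := hCesub (h ▸ hfC)
        rcases Finset.mem_insert.1 this with h' | h'
        · exact hef h'.symm
        · exact hfI h'
      -- find x ∈ Ce ∩ I with x ∉ C
      have hx : ∃ x, x ∈ Ce ∧ x ∈ I ∧ x ∉ C := by
        by_contra hno
        push_neg at hno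
        have hCeC : Ce ⊆ C := by
          intro a ha
          rcases Finset.mem_insert.1 (hCesub ha) with rfl | haI
          · exact heC
          · exact hno a ha haI
        rcases eq_or_lt_of_le hCeC with heq | hlt
        · exact hCne heq.symm
        · exact hCe.1 (hC.2 _ hlt)
      obtain ⟨x, hxCe, hxI, hxC⟩ := hx
      have hxe : x ≠ e := fun h => heI (h ▸ hxI)
      set I' : Finset E := insert e (I.erase x) with hI'def
      have hI'eq : I' = (insert e I).erase x := by
        rw [hI'def, Finset.erase_insert_of_ne hxe.symm]
      have hI'card : I'.card = I.card := by
        rw [hI'def, Finset.card_insert_of_notMem (fun h => heI (Finset.mem_of_mem_erase h)),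
          Finset.card_erase_of_mem hxI]
        have : 1 ≤ I.card := Finset.card_pos.2 ⟨x, hxI⟩
        omega
      have hrI' : matroidRank Ind I' = I.card := by
        rw [hI'eq, rank_erase_of_mem_circuit hM hCe hxCe hCesub, hcl e heX]
      have hI'ind : Ind I' := indep_of_rank_eq_card hM (by rw [hrI', hI'card])
      set X' : Finset E := insert x (X.erase e) with hX'def
      -- rank of I ∪ {e, g} for g ∈ X
      have hrIeg : ∀ g ∈ X, matroidRank Ind (I ∪ {e, g}) = I.card := by
        intro g hg
        rw [rank_union_eq_of_forall_insert hM ?_, rank_eq_card_of_indep hM hI]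
        intro y hy
        rcases Finset.mem_insert.1 hy with rfl | hy'
        · rw [hcl y heX, rank_eq_card_of_indep hM hI]
        · rw [Finset.mem_singleton.1 hy', hcl g hg, rank_eq_card_of_indep hM hI]
      have hdisj' : ∀ g ∈ X', g ∉ I' := by
        intro g hg hgI'
        rcases Finset.mem_insert.1 hg with rfl | hg'
        · rcases Finset.mem_insert.1 hgI' with h | h
          · exact hxe h
          · exact (Finset.notMem_erase g I) h
        · have hgX : g ∈ X := Finset.mem_of_mem_erase hg'
          have hge : g ≠ e := (Finset.mem_erase.1 hg').1
          rcases Finset.mem_insert.1 hgI' with h | h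
          · exact hge h
          · exact hdisj g hgX (Finset.mem_of_mem_erase h)
      have hsubIeg : ∀ g, insert g I' ⊆ I ∪ {e, g} := by
        intro g a ha
        rcases Finset.mem_insert.1 ha with rfl | ha'
        · simp
        · rcases Finset.mem_insert.1 ha' with rfl | h
          · simp
          · exact Finset.mem_union_left _ (Finset.mem_of_mem_erase h)
      have hcl' : ∀ g ∈ X', matroidRank Ind (insert g I') = I'.card := by
        intro g hg
        have hub : matroidRank Ind (insert g I') ≤ I.card := by
          rcases Finset.mem_insert.1 hg with rfl | hg'
          · -- g = x : insert x I' ⊆ insert e I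
            have : insert g I' ⊆ insert e I := by
              intro a ha
              rcases Finset.mem_insert.1 ha with rfl | ha'
              · exact Finset.mem_insert_of_mem hxI
              · rcases Finset.mem_insert.1 ha' with rfl | h
                · exact Finset.mem_insert_self _ _
                · exact Finset.mem_insert_of_mem (Finset.mem_of_mem_erase h)
            calc matroidRank Ind (insert g I') ≤ matroidRank Ind (insert e I) :=
                  rank_mono hM this
              _ = I.card := hcl e heX
          · have hgX : g ∈ X := Finset.mem_of_mem_erase hg'
            calc matroidRank Ind (insert g I') ≤ matroidRank Ind (I ∪ {e, g}) :=
                  rank_mono hM (hsubIeg g)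
              _ = I.card := hrIeg g hgX
        have hlb : matroidRank Ind I' ≤ matroidRank Ind (insert g I') :=
          rank_mono hM (Finset.subset_insert _ _)
        rw [hI'card]
        omega
      have hfund' : ∀ g ∈ X', ∀ D, IsCircuit Ind D → D ⊆ insert g I' → D ∈ 𝓒 := by
        intro g hg D hD hDsub
        rcases Finset.mem_insert.1 hg with rfl | hg'
        · -- g = x
          have hsub2 : insert g I' ⊆ insert e I := by
            intro a ha
            rcases Finset.mem_insert.1 ha with rfl | ha'
            · exact Finset.mem_insert_of_mem hxI
            · rcases Finset.mem_insert.1 ha' with rfl | h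
              · exact Finset.mem_insert_self _ _
              · exact Finset.mem_insert_of_mem (Finset.mem_of_mem_erase h)
          exact hfund e heX D hD (hDsub.trans hsub2)
        · have hgX : g ∈ X := Finset.mem_of_mem_erase hg'
          have hge : g ≠ e := (Finset.mem_erase.1 hg').1
          have hgI : g ∉ I := hdisj g hgX
          exact pair_lemma hM h𝓒lin hI heI hgI (Ne.symm hge) (hcl e heX) (hcl g hgX)
            (hfund e heX) (hfund g hgX) hD (hDsub.trans (hsubIeg g))
      have hCsub' : C ⊆ I' ∪ X' := by
        intro a ha
        rcases Finset.mem_union.1 (hCsub ha) with haI | haX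
        · have hax : a ≠ x := fun h => hxC (h ▸ ha)
          exact Finset.mem_union_left _
            (Finset.mem_insert_of_mem (Finset.mem_erase.2 ⟨hax, haI⟩))
        · by_cases hae : a = e
          · exact Finset.mem_union_left _ (hae ▸ Finset.mem_insert_self _ _)
          · exact Finset.mem_union_right _
              (Finset.mem_insert_of_mem (Finset.mem_erase.2 ⟨hae, haX⟩))
      have hcard' : (C \ I').card ≤ k := by
        have hsub3 : C \ I' ⊆ (C \ I).erase e := by
          intro a ha
          obtain ⟨haC, haI'⟩ := Finset.mem_sdiff.1 ha
          have hae : a ≠ e := fun h => haI' (h ▸ Finset.mem_insert_self _ _)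
          have hax : a ≠ x := fun h => hxC (h ▸ haC)
          have haI : a ∉ I := fun h =>
            haI' (Finset.mem_insert_of_mem (Finset.mem_erase.2 ⟨hax, h⟩))
          exact Finset.mem_erase.2 ⟨hae, Finset.mem_sdiff.2 ⟨haC, haI⟩⟩
        calc (C \ I').card ≤ ((C \ I).erase e).card := Finset.card_le_card hsub3
          _ = (C \ I).card - 1 := Finset.card_erase_of_mem he
          _ ≤ k := by omega
      exact ih I' X' C hI'ind hdisj' (by rw [hI'card] at hcl' ⊢; exact hcl')
        hfund' hC hCsub' hcard'

lemma balanced_mono {S T : Finset E} (h : CBalanced Ind 𝓒 T) (hsub : S ⊆ T) :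
    CBalanced Ind 𝓒 S := fun C hC hCc => h C (hC.trans hsub) hCc

lemma rank_insert_le (hM : IsMatroidIndep Ind) (S : Finset E) (e : E) :
    matroidRank Ind (insert e S) ≤ matroidRank Ind S + 1 := by
  have h1 : insert e S = S ∪ {e} := by ext a; simp [or_comm]
  rw [h1]
  have h2 := rank_union_le hM S {e}
  have h3 := rank_le_card hM ({e} : Finset E)
  simp at h3
  omega

lemma exists_good_insert (hM : IsMatroidIndep Ind) {I J : Finset E}
    (h : matroidRank Ind I < matroidRank Ind J) :
    ∃ e ∈ J, e ∉ I ∧ matroidRank Ind (insert e I) = matroidRank Ind I + 1 := by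
  by_contra hno
  push_neg at hno
  have hall : ∀ e ∈ J, matroidRank Ind (insert e I) = matroidRank Ind I := by
    intro e he
    by_cases heI : e ∈ I
    · rw [Finset.insert_eq_self.2 heI]
    · have h1 := hno e he heI
      have h2 := rank_insert_le hM I e
      have h3 := rank_mono hM (Finset.subset_insert e I)
      omega
  have := rank_union_eq_of_forall_insert hM hall
  have h4 : matroidRank Ind J ≤ matroidRank Ind (I ∪ J) :=
    rank_mono hM Finset.subset_union_right
  omega

/-- The lift independence predicate. -/
def LiftIndep (Ind : Finset E → Prop) (𝓒 : Set (Finset E)) (S : Finset E) : Prop :=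
  Ind S ∨ (matroidRank Ind S + 1 = S.card ∧ ¬ CBalanced Ind 𝓒 S)

lemma liftIndep_card (hM : IsMatroidIndep Ind) {S : Finset E}
    (h : LiftIndep Ind 𝓒 S) : S.card ≤ matroidRank Ind S + 1 := by
  rcases h with h | ⟨h, _⟩
  · rw [rank_eq_card_of_indep hM h]; omega
  · omega

lemma lift_indep_isMatroid (hM : IsMatroidIndep Ind)
    (h𝓒lin : ∀ C₁ ∈ 𝓒, ∀ C₂ ∈ 𝓒,
      (matroidRank Ind (C₁ ∪ C₂) : ℤ) = (C₁ ∪ C₂).card - 2 →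
      ∀ C₃ : Finset E, IsCircuit Ind C₃ → C₃ ⊆ C₁ ∪ C₂ → C₃ ∈ 𝓒) :
    IsMatroidIndep (LiftIndep Ind 𝓒) := by
  refine ⟨Or.inl hM.1, ?_, ?_⟩
  · -- downward closed
    rintro I J (hJ | ⟨hrJ, hbJ⟩) hIJ
    · exact Or.inl (hM.2.1 hJ hIJ)
    · by_cases hI : Ind I
      · exact Or.inl hI
      · refine Or.inr ⟨?_, ?_⟩
        · have h1 := nullity_mono hM hIJ
          have h2 := rank_le_card hM I
          have h3 : matroidRank Ind I ≠ I.card := fun hh => hI (indep_of_rank_eq_card hM hh)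
          omega
        · -- I has a circuit, which must be the unique circuit of J, which is bad
          obtain ⟨D, hDsub, hD⟩ := exists_circuit_of_dep hM hI
          rw [CBalanced] at hbJ
          push_neg at hbJ
          obtain ⟨C₀, hC₀J, hC₀, hC₀𝓒⟩ := hbJ
          have : D = C₀ :=
            unique_circuit_of_nullity_one hM hrJ hD hC₀ (hDsub.trans hIJ) hC₀J
          intro hbal
          exact hC₀𝓒 (this ▸ hbal D hDsub hD)
  · -- exchange
    rintro I J hI' hJ' hcard
    rcases hI' with hI | ⟨hrI, hbI⟩
    · -- I independent in M
      have hrIc : matroidRank Ind I = I.card := rank_eq_card_of_indep hM hI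
      rcases hJ' with hJ | ⟨hrJ, hbJ⟩
      · obtain ⟨e, h1, h2, h3⟩ := hM.2.2 hI hJ hcard
        exact ⟨e, h1, h2, Or.inl h3⟩
      · by_cases hgap : matroidRank Ind I < matroidRank Ind J
        · obtain ⟨e, h1, h2, h3⟩ := exists_good_insert hM hgap
          refine ⟨e, h1, h2, Or.inl (indep_of_rank_eq_card hM ?_)⟩
          rw [h3, Finset.card_insert_of_notMem h2, hrIc]
        · -- |J| = |I| + 1 and J ⊆ cl(I) unless some insert is independent
          have hJI : J.card = I.card + 1 := by omega
          by_cases hgood : ∃ e ∈ J, e ∉ I ∧ Ind (insert e I)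
          · obtain ⟨e, h1, h2, h3⟩ := hgood
            exact ⟨e, h1, h2, Or.inl h3⟩
          · push_neg at hgood
            have hcl : ∀ e ∈ J \ I, matroidRank Ind (insert e I) = I.card := by
              intro e he
              obtain ⟨heJ, heI⟩ := Finset.mem_sdiff.1 he
              have h1 : ¬ Ind (insert e I) := hgood e heJ heI
              have h2 := rank_insert_le hM I e
              have h3 := rank_mono hM (Finset.subset_insert e I)
              have h4 : matroidRank Ind (insert e I) ≠ (insert e I).card := fun hh =>
                h1 (indep_of_rank_eq_card hM hh)
              rw [Finset.card_insert_of_notMem heI] at h4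
              omega
            rw [CBalanced] at hbJ
            push_neg at hbJ
            obtain ⟨C₀, hC₀J, hC₀, hC₀𝓒⟩ := hbJ
            by_cases hfund : ∀ e ∈ J \ I, ∀ D, IsCircuit Ind D → D ⊆ insert e I → D ∈ 𝓒
            · exfalso
              apply hC₀𝓒
              refine kernel_lemma hM h𝓒lin (C₀ \ I).card I (J \ I) C₀ hI
                (fun e he => (Finset.mem_sdiff.1 he).2) hcl hfund hC₀ ?_ le_rfl
              intro a ha
              by_cases haI : a ∈ I
              · exact Finset.mem_union_left _ haI
              · exact Finset.mem_union_right _ (Finset.mem_sdiff.2 ⟨hC₀J ha, haI⟩)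
            · push_neg at hfund
              obtain ⟨e, he, D, hD, hDsub, hD𝓒⟩ := hfund
              obtain ⟨heJ, heI⟩ := Finset.mem_sdiff.1 he
              refine ⟨e, heJ, heI, Or.inr ⟨?_, ?_⟩⟩
              · rw [hcl e he, Finset.card_insert_of_notMem heI]
              · intro hbal
                exact hD𝓒 (hbal D hDsub hD)
    · -- I is nullity-one unbalanced
      rw [CBalanced] at hbI
      push_neg at hbI
      obtain ⟨CI, hCIsub, hCI, hCI𝓒⟩ := hbI
      have hgap : matroidRank Ind I < matroidRank Ind J := by
        rcases hJ' with hJ | ⟨hrJ, _⟩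
        · rw [rank_eq_card_of_indep hM hJ]; omega
        · omega
      obtain ⟨e, h1, h2, h3⟩ := exists_good_insert hM hgap
      refine ⟨e, h1, h2, Or.inr ⟨?_, ?_⟩⟩
      · rw [h3, Finset.card_insert_of_notMem h2]; omega
      · intro hbal
        exact hCI𝓒 (hbal CI (hCIsub.trans (Finset.subset_insert e I)) hCI)

lemma lift_rank_balanced (hM : IsMatroidIndep Ind) {S : Finset E}
    (hbal : CBalanced Ind 𝓒 S) :
    matroidRank (LiftIndep Ind 𝓒) S = matroidRank Ind S := by
  unfold matroidRank
  congr 1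
  ext n
  constructor
  · rintro ⟨I, hIS, hI', rfl⟩
    refine ⟨I, hIS, ?_, rfl⟩
    rcases hI' with h | ⟨_, hb⟩
    · exact h
    · exact absurd (balanced_mono hbal hIS) hb
  · rintro ⟨I, hIS, hI, rfl⟩
    exact ⟨I, hIS, Or.inl hI, rfl⟩

lemma lift_rank_unbalanced (hM : IsMatroidIndep Ind) {S : Finset E}
    (hbal : ¬ CBalanced Ind 𝓒 S) :
    matroidRank (LiftIndep Ind 𝓒) S = matroidRank Ind S + 1 := by
  apply le_antisymm
  · show sSup {n | ∃ I ⊆ S, LiftIndep Ind 𝓒 I ∧ I.card = n} ≤ _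
    have hne : {n | ∃ I ⊆ S, LiftIndep Ind 𝓒 I ∧ I.card = n}.Nonempty :=
      ⟨0, ∅, by simp, Or.inl hM.1, by simp⟩
    apply csSup_le hne
    rintro n ⟨I, hIS, hI', rfl⟩
    have := liftIndep_card hM hI'
    have h2 : matroidRank Ind I ≤ matroidRank Ind S := rank_mono hM hIS
    omega
  · -- construct a LiftIndep subset of size r S + 1
    rw [CBalanced] at hbal
    push_neg at hbal
    obtain ⟨C, hCS, hC, hC𝓒⟩ := hbal
    have hCne : C.Nonempty := by
      rcases C.eq_empty_or_nonempty with rfl | h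
      · exact absurd hM.1 hC.1
      · exact h
    obtain ⟨x, hx⟩ := hCne
    have hCex : Ind (C.erase x) := hC.2 _ (Finset.erase_ssubset hx)
    obtain ⟨B, hB1, hB2, hB3, hB4⟩ :=
      exists_basis_superset hM hCex ((Finset.erase_subset x C).trans hCS)
    have hxB : x ∉ B := by
      intro hxB
      apply hC.1
      apply hM.2.1 hB3
      intro a ha
      by_cases hax : a = x
      · exact hax ▸ hxB
      · exact hB1 (Finset.mem_erase.2 ⟨hax, ha⟩)
    have hrins : matroidRank Ind (insert x B) = matroidRank Ind B := by
      apply rank_insert_eq_of_subset hM hB1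
      rw [Finset.insert_erase hx]
      have h1 := circuit_rank hM hC
      have h2 : matroidRank Ind (C.erase x) = (C.erase x).card :=
        rank_eq_card_of_indep hM hCex
      rw [h2, Finset.card_erase_of_mem hx]
      omega
    have hCsub : C ⊆ insert x B := by
      intro a ha
      by_cases hax : a = x
      · exact hax ▸ Finset.mem_insert_self _ _
      · exact Finset.mem_insert_of_mem (hB1 (Finset.mem_erase.2 ⟨hax, ha⟩))
    refine le_csSup (bddAbove_rankSet S) ⟨insert x B, ?_, Or.inr ⟨?_, ?_⟩, ?_⟩
    · exact Finset.insert_subset (hCS hx) hB2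
    · rw [hrins, Finset.card_insert_of_notMem hxB, rank_eq_card_of_indep hM hB3]
    · intro hbal
      exact hC𝓒 (hbal C hCsub hC)
    · rw [Finset.card_insert_of_notMem hxB, hB4]

end LiftProof

/-- given a linear class `𝓒` of circuits of a matroid `M`, the function
`r_𝓒(S) = r(S)` if `S` is `𝓒`-balanced and `r(S) + 1` otherwise is the rank function
of a matroid on `E` (an elementary lift of `M`). -/
theorem linear_class_lift_rank {E : Type*} [Fintype E] [DecidableEq E]
    (Ind : Finset E → Prop) (hM : IsMatroidIndep Ind)
    (𝓒 : Set (Finset E)) (h𝓒circ : ∀ C ∈ 𝓒, IsCircuit Ind C)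
    (h𝓒lin : ∀ C₁ ∈ 𝓒, ∀ C₂ ∈ 𝓒,
      (matroidRank Ind (C₁ ∪ C₂) : ℤ) = (C₁ ∪ C₂).card - 2 →
      ∀ C₃ : Finset E, IsCircuit Ind C₃ → C₃ ⊆ C₁ ∪ C₂ → C₃ ∈ 𝓒) :
    ∃ Ind' : Finset E → Prop, IsMatroidIndep Ind' ∧
      ∀ S : Finset E,
        (CBalanced Ind 𝓒 S → matroidRank Ind' S = matroidRank Ind S) ∧
        (¬ CBalanced Ind 𝓒 S → matroidRank Ind' S = matroidRank Ind S + 1) := by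
  refine ⟨LiftProof.LiftIndep Ind 𝓒, LiftProof.lift_indep_isMatroid hM h𝓒lin, fun S => ⟨?_, ?_⟩⟩
  · exact fun h => LiftProof.lift_rank_balanced hM h
  · exact fun h => LiftProof.lift_rank_unbalanced hM h
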